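/- Let σ̂ be a positive random variable with density (1/σ) g₂(σ̂/σ) for a scale parameter σ > 0 (g₂ a fixed probability density on (0,∞)). With proposal r_n(σ) ∝ 1/σ on (0,∞), for the pivot T(σ, s) = s/σ with s_{t,σ} = tσ, the integral ∫₀^∞ (1/σ) K_ε(tσ − s_obs) dσ equals ∫ (1/(u + s_obs)) K_ε(u) du, which is independent of t; consequently the conditional law of σ_ACC/σ̂ given σ̂_obs equals the sampling law of σ̂/σ given σ = σ₀. -/

import Mathlib

open MeasureTheory Set ENNReal

lemma my_lintegral_image {s : Set ℝ} {f : ℝ → ℝ} {f' : ℝ → ℝ}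
    (hs : MeasurableSet s) (hf' : ∀ x ∈ s, HasDerivWithinAt f (f' x) s x)
    (hf : InjOn f s) (g : ℝ → ℝ≥0∞) :
    ∫⁻ x in f '' s, g x = ∫⁻ x in s, ENNReal.ofReal |f' x| * g (f x) := by
  simpa only [ContinuousLinearMap.det_toSpanSingleton] using
    lintegral_image_eq_lintegral_abs_det_fderiv_mul volume hs
      (fun x hx => (hf' x hx).hasFDerivWithinAt) hf g

/-- affine substitution: `∫⁻ σ in Ioi 0, g σ = ∫⁻ u in Ioi (-b), t⁻¹ * g ((u+b)/t)` -/
lemma my_affine (t b : ℝ) (ht : 0 < t) (g : ℝ → ℝ≥0∞) :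
    ∫⁻ x in Ioi (0:ℝ), g x
      = ∫⁻ u in Ioi (-b), ENNReal.ofReal t⁻¹ * g ((u + b) / t) := by
  have himg : (fun u : ℝ => (u + b) / t) '' Ioi (-b) = Ioi 0 := by
    ext x
    constructor
    · rintro ⟨u, hu, rfl⟩
      have : (0:ℝ) < u + b := by linarith [mem_Ioi.mp hu]
      exact mem_Ioi.mpr (div_pos this ht)
    · intro hx
      refine ⟨t * x - b, ?_, by field_simp; ring⟩
      have : 0 < t * x := mul_pos ht (mem_Ioi.mp hx)
      simp only [mem_Ioi]; linarith
  have hderiv : ∀ u ∈ Ioi (-b), HasDerivWithinAt (fun u : ℝ => (u + b) / t) t⁻¹ (Ioi (-b)) u := by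
    intro u _
    simpa using (((hasDerivWithinAt_id u _).add_const b).div_const t)
  have hinj : InjOn (fun u : ℝ => (u + b) / t) (Ioi (-b)) := by
    intro x _ y _ h
    field_simp at h
    linarith
  rw [← himg, my_lintegral_image measurableSet_Ioi hderiv hinj g]
  exact setLIntegral_congr_fun measurableSet_Ioi (by
    intro u _
    rw [abs_of_pos (inv_pos.mpr ht)])

/-- scale substitution: for `c > 0`,
`∫⁻ σ in Ioi 0, ofReal (σ⁻¹ * σ⁻¹) * g (c / σ) = ofReal c⁻¹ * ∫⁻ w in Ioi 0, g w`. -/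
lemma my_scale (c : ℝ) (hc : 0 < c) (g : ℝ → ℝ≥0∞) :
    ∫⁻ σ in Ioi (0:ℝ), ENNReal.ofReal (σ⁻¹ * σ⁻¹) * g (c / σ)
      = ENNReal.ofReal c⁻¹ * ∫⁻ w in Ioi (0:ℝ), g w := by
  have himg : (fun σ : ℝ => c / σ) '' Ioi 0 = Ioi 0 := by
    ext x
    constructor
    · rintro ⟨σ, hσ, rfl⟩
      exact mem_Ioi.mpr (div_pos hc (mem_Ioi.mp hσ))
    · intro hx
      exact ⟨c / x, mem_Ioi.mpr (div_pos hc (mem_Ioi.mp hx)), by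
        field_simp⟩
  have hderiv : ∀ σ ∈ Ioi (0:ℝ),
      HasDerivWithinAt (fun σ : ℝ => c / σ) (-(c * (σ⁻¹ * σ⁻¹))) (Ioi 0) σ := by
    intro σ hσ
    have hσ0 : σ ≠ 0 := ne_of_gt (mem_Ioi.mp hσ)
    have := ((hasDerivAt_inv hσ0).const_mul c).hasDerivWithinAt (s := Ioi (0:ℝ))
    simpa [div_eq_mul_inv, mul_assoc, pow_two] using this
  have hinj : InjOn (fun σ : ℝ => c / σ) (Ioi 0) := by
    intro x hx y hy h
    have hx0 : x ≠ 0 := ne_of_gt (mem_Ioi.mp hx)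
    have hy0 : y ≠ 0 := ne_of_gt (mem_Ioi.mp hy)
    field_simp at h
    linarith
  have key := my_lintegral_image measurableSet_Ioi hderiv hinj g
  rw [himg] at key
  rw [key]
  rw [← lintegral_const_mul' _ _ (by simp : ENNReal.ofReal c⁻¹ ≠ ⊤)]
  refine setLIntegral_congr_fun measurableSet_Ioi ?_
  intro σ hσ
  dsimp only
  have hσ0 : (0:ℝ) < σ := mem_Ioi.mp hσ
  have h1 : |(-(c * (σ⁻¹ * σ⁻¹)))| = c * (σ⁻¹ * σ⁻¹) := by
    rw [abs_neg, abs_of_nonneg]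
    positivity
  rw [h1, ENNReal.ofReal_mul hc.le, ← mul_assoc, ← mul_assoc,
    ← ENNReal.ofReal_mul (inv_nonneg.mpr hc.le),
    inv_mul_cancel₀ (ne_of_gt hc), ENNReal.ofReal_one, one_mul]

lemma part_a (K : ℝ → ℝ) (hK_meas : Measurable K) (hK_nonneg : ∀ x, 0 ≤ K x)
    (sobs t : ℝ) (ht : 0 < t) :
    (∫ σ in Ioi (0:ℝ), σ⁻¹ * K (t * σ - sobs))
      = ∫ u in Ioi (-sobs), (u + sobs)⁻¹ * K u := by
  have ht0 : t ≠ 0 := ne_of_gt ht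
  have hL : (∫ σ in Ioi (0:ℝ), σ⁻¹ * K (t * σ - sobs))
      = (∫⁻ σ in Ioi (0:ℝ), ENNReal.ofReal (σ⁻¹ * K (t * σ - sobs))).toReal := by
    rw [integral_eq_lintegral_of_nonneg_ae]
    · exact (ae_restrict_iff' measurableSet_Ioi).mpr (ae_of_all _ fun σ hσ =>
        mul_nonneg (inv_nonneg.mpr (le_of_lt (mem_Ioi.mp hσ))) (hK_nonneg _))
    · exact ((measurable_inv.mul (hK_meas.comp (by fun_prop))).aestronglyMeasurable)
  have hR : (∫ u in Ioi (-sobs), (u + sobs)⁻¹ * K u)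
      = (∫⁻ u in Ioi (-sobs), ENNReal.ofReal ((u + sobs)⁻¹ * K u)).toReal := by
    rw [integral_eq_lintegral_of_nonneg_ae]
    · refine (ae_restrict_iff' measurableSet_Ioi).mpr (ae_of_all _ fun u hu => ?_)
      have : (0:ℝ) < u + sobs := by linarith [mem_Ioi.mp hu]
      exact mul_nonneg (inv_nonneg.mpr this.le) (hK_nonneg _)
    · exact (((measurable_id.add_const sobs).inv.mul hK_meas).aestronglyMeasurable)
  rw [hL, hR]
  congr 1
  rw [my_affine t sobs ht (fun σ => ENNReal.ofReal (σ⁻¹ * K (t * σ - sobs)))]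
  refine setLIntegral_congr_fun measurableSet_Ioi ?_
  intro u hu
  dsimp only
  have hpos : (0:ℝ) < u + sobs := by linarith [mem_Ioi.mp hu]
  have harg : t * ((u + sobs) / t) - sobs = u := by field_simp; ring
  rw [harg, ← ENNReal.ofReal_mul (inv_nonneg.mpr ht.le)]
  congr 1
  field_simp

lemma inner_lemma (g₂ K : ℝ → ℝ)
    (hg₂_nonneg : ∀ x, 0 ≤ g₂ x) (hg₂_supp : ∀ x ≤ (0:ℝ), g₂ x = 0)
    (hK_nonneg : ∀ x, 0 ≤ K x) (sobs : ℝ)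
    (W : Set ℝ) (hW : MeasurableSet W) (s : ℝ) :
    ∫⁻ σ, ({q : ℝ × ℝ | 0 < q.1 ∧ q.2 / q.1 ∈ W}).indicator
        (fun q => ENNReal.ofReal (q.1⁻¹ * (q.1⁻¹ * g₂ (q.2 / q.1)) * K (q.2 - sobs))) (σ, s)
      = (Ioi (0:ℝ)).indicator (fun s => ENNReal.ofReal (s⁻¹ * K (s - sobs))) s
          * ∫⁻ w in Ioi (0:ℝ) ∩ W, ENNReal.ofReal (g₂ w) := by
  by_cases hs : 0 < s
  · -- rewrite integrand pointwise
    have hpt : ∀ σ : ℝ,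
        ({q : ℝ × ℝ | 0 < q.1 ∧ q.2 / q.1 ∈ W}).indicator
          (fun q => ENNReal.ofReal (q.1⁻¹ * (q.1⁻¹ * g₂ (q.2 / q.1)) * K (q.2 - sobs))) (σ, s)
        = (Ioi (0:ℝ)).indicator
            (fun σ => ENNReal.ofReal (σ⁻¹ * σ⁻¹) *
              (W.indicator (fun w => ENNReal.ofReal (g₂ w)) (s / σ)) *
              ENNReal.ofReal (K (s - sobs))) σ := by
      intro σ
      by_cases hσ : 0 < σ
      · by_cases hw : s / σ ∈ W
        · rw [indicator_of_mem
              (show (σ,s) ∈ {q : ℝ × ℝ | 0 < q.1 ∧ q.2 / q.1 ∈ W} from ⟨hσ, hw⟩),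
            indicator_of_mem (mem_Ioi.mpr hσ), indicator_of_mem hw,
            ← ENNReal.ofReal_mul (mul_self_nonneg σ⁻¹),
            ← ENNReal.ofReal_mul (mul_nonneg (mul_self_nonneg σ⁻¹) (hg₂_nonneg _))]
          congr 1
          ring
        · rw [indicator_of_notMem
              (show (σ,s) ∉ {q : ℝ × ℝ | 0 < q.1 ∧ q.2 / q.1 ∈ W} from fun h => hw h.2),
            indicator_of_mem (mem_Ioi.mpr hσ), indicator_of_notMem hw]
          simp
      · rw [indicator_of_notMem
            (show (σ,s) ∉ {q : ℝ × ℝ | 0 < q.1 ∧ q.2 / q.1 ∈ W} from fun h => hσ h.1),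
          indicator_of_notMem (by simpa using hσ)]
    simp_rw [hpt]
    rw [lintegral_indicator measurableSet_Ioi,
      lintegral_mul_const' (ENNReal.ofReal (K (s - sobs))) _ ENNReal.ofReal_ne_top,
      my_scale s hs, lintegral_indicator hW, Measure.restrict_restrict hW, inter_comm W _,
      indicator_of_mem (mem_Ioi.mpr hs), ENNReal.ofReal_mul (inv_nonneg.mpr hs.le)]
    ring
  · have hs' : s ≤ 0 := le_of_not_gt hs
    have hpt : ∀ σ : ℝ,
        ({q : ℝ × ℝ | 0 < q.1 ∧ q.2 / q.1 ∈ W}).indicator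
          (fun q => ENNReal.ofReal (q.1⁻¹ * (q.1⁻¹ * g₂ (q.2 / q.1)) * K (q.2 - sobs))) (σ, s)
        = 0 := by
      intro σ
      by_cases hmem : ((σ, s) : ℝ × ℝ) ∈ {q : ℝ × ℝ | 0 < q.1 ∧ q.2 / q.1 ∈ W}
      · rw [indicator_of_mem hmem]
        have hdiv : s / σ ≤ 0 := div_nonpos_of_nonpos_of_nonneg hs' hmem.1.le
        simp [hg₂_supp _ hdiv]
      · rw [indicator_of_notMem hmem]
    simp_rw [hpt]
    rw [lintegral_zero, indicator_of_notMem (by simpa using hs), zero_mul]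

lemma big (g₂ K : ℝ → ℝ)
    (hg₂_meas : Measurable g₂) (hg₂_nonneg : ∀ x, 0 ≤ g₂ x)
    (hg₂_supp : ∀ x ≤ (0:ℝ), g₂ x = 0)
    (hK_meas : Measurable K) (hK_nonneg : ∀ x, 0 ≤ K x) (sobs : ℝ)
    (W : Set ℝ) (hW : MeasurableSet W) :
    (∫ q : ℝ × ℝ, ({q : ℝ × ℝ | 0 < q.1 ∧ q.2 / q.1 ∈ W}).indicator
        (fun q => q.1⁻¹ * (q.1⁻¹ * g₂ (q.2 / q.1)) * K (q.2 - sobs)) q)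
      = ((∫⁻ s, (Ioi (0:ℝ)).indicator (fun s => ENNReal.ofReal (s⁻¹ * K (s - sobs))) s)
          * ∫⁻ w in Ioi (0:ℝ) ∩ W, ENNReal.ofReal (g₂ w)).toReal := by
  set T : Set (ℝ × ℝ) := {q : ℝ × ℝ | 0 < q.1 ∧ q.2 / q.1 ∈ W} with hTdef
  have hT : MeasurableSet T := by
    have : T = {q : ℝ × ℝ | 0 < q.1} ∩ (fun q : ℝ × ℝ => q.2 / q.1) ⁻¹' W := rfl
    rw [this]
    exact (measurableSet_lt measurable_const measurable_fst).inter
      ((measurable_snd.div measurable_fst) hW)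
  set f : ℝ × ℝ → ℝ := fun q => q.1⁻¹ * (q.1⁻¹ * g₂ (q.2 / q.1)) * K (q.2 - sobs) with hfdef
  have hf : Measurable f := by
    apply Measurable.mul
    · exact measurable_fst.inv.mul
        (measurable_fst.inv.mul (hg₂_meas.comp (measurable_snd.div measurable_fst)))
    · exact hK_meas.comp (measurable_snd.sub measurable_const)
  rw [integral_eq_lintegral_of_nonneg_ae
     (ae_of_all _ (indicator_nonneg (fun q hq =>
        mul_nonneg (mul_nonneg (inv_nonneg.mpr hq.1.le)
          (mul_nonneg (inv_nonneg.mpr hq.1.le) (hg₂_nonneg _))) (hK_nonneg _))))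
     ((hf.indicator hT).aestronglyMeasurable)]
  congr 1
  have hofind : ∀ q : ℝ × ℝ, ENNReal.ofReal (T.indicator f q)
      = T.indicator (fun q => ENNReal.ofReal (f q)) q := by
    intro q
    by_cases h : q ∈ T <;> simp [h]
  rw [← hfdef]
  simp_rw [hofind]
  rw [Measure.volume_eq_prod]
  rw [lintegral_prod_symm' (T.indicator fun q => ENNReal.ofReal (f q)) (hf.ennreal_ofReal.indicator hT)]
  have := fun s => inner_lemma g₂ K hg₂_nonneg hg₂_supp hK_nonneg sobs W hW s
  simp_rw [hTdef, hfdef, this]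
  exact lintegral_mul_const'' _ ((measurable_id.inv.mul
    (hK_meas.comp (measurable_id.sub measurable_const))).ennreal_ofReal.indicator
    measurableSet_Ioi).aemeasurable

lemma part_b (g₂ K : ℝ → ℝ)
    (hg₂_meas : Measurable g₂) (hg₂_nonneg : ∀ x, 0 ≤ g₂ x)
    (hg₂_supp : ∀ x ≤ (0:ℝ), g₂ x = 0) (hg₂_int : ∫ t in Ioi (0:ℝ), g₂ t = 1)
    (hg₂_integrable : Integrable g₂)
    (hK_meas : Measurable K) (hK_nonneg : ∀ x, 0 ≤ K x)
    (sobs : ℝ) (v : ℝ) :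
    (∫ q : ℝ × ℝ,
        ({q : ℝ × ℝ | 0 < q.1 ∧ q.2 / q.1 ≤ v}).indicator
          (fun q => q.1⁻¹ * (q.1⁻¹ * g₂ (q.2 / q.1)) * K (q.2 - sobs)) q)
      = (∫ w in Ioc (0 : ℝ) v, g₂ w) *
          ∫ q : ℝ × ℝ,
            ({q : ℝ × ℝ | 0 < q.1}).indicator
              (fun q => q.1⁻¹ * (q.1⁻¹ * g₂ (q.2 / q.1)) * K (q.2 - sobs)) q := by
  have e1 : {q : ℝ × ℝ | 0 < q.1 ∧ q.2 / q.1 ≤ v}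
      = {q : ℝ × ℝ | 0 < q.1 ∧ q.2 / q.1 ∈ Iic v} := rfl
  have e2 : {q : ℝ × ℝ | 0 < q.1}
      = {q : ℝ × ℝ | 0 < q.1 ∧ q.2 / q.1 ∈ (univ : Set ℝ)} := by
    ext q; simp
  rw [e1, e2, big g₂ K hg₂_meas hg₂_nonneg hg₂_supp hK_meas hK_nonneg sobs _ measurableSet_Iic,
    big g₂ K hg₂_meas hg₂_nonneg hg₂_supp hK_meas hK_nonneg sobs _ MeasurableSet.univ,
    inter_univ, Ioi_inter_Iic]
  have hCfull : (∫⁻ w in Ioi (0:ℝ), ENNReal.ofReal (g₂ w)) = 1 := by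
    rw [← ofReal_integral_eq_lintegral_ofReal hg₂_integrable.integrableOn
      (ae_of_all _ hg₂_nonneg), hg₂_int, ENNReal.ofReal_one]
  have hCv : (∫⁻ w in Ioc (0:ℝ) v, ENNReal.ofReal (g₂ w))
      = ENNReal.ofReal (∫ w in Ioc (0:ℝ) v, g₂ w) := by
    rw [ofReal_integral_eq_lintegral_ofReal hg₂_integrable.integrableOn
      (ae_of_all _ hg₂_nonneg)]
  rw [hCfull, hCv, mul_one, ENNReal.toReal_mul, ENNReal.toReal_ofReal
    (integral_nonneg hg₂_nonneg)]
  ring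


theorem scale_family_exact_matching
    (g₂ K : ℝ → ℝ)
    (hg₂_meas : Measurable g₂) (hg₂_nonneg : ∀ t, 0 ≤ g₂ t)
    (hg₂_supp : ∀ t ≤ (0 : ℝ), g₂ t = 0) (hg₂_int : ∫ t in Ioi (0 : ℝ), g₂ t = 1)
    (hg₂_integrable : Integrable g₂)
    (hK_meas : Measurable K) (hK_nonneg : ∀ t, 0 ≤ K t) (hK_int : ∫ t, K t = 1)
    (hK_integrable : Integrable K)
    (sobs : ℝ) (hsobs : 0 < sobs) :
    -- (a) the normalizing integral is free of `t`
    (∀ t : ℝ, 0 < t →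
      (∫ σ in Ioi (0 : ℝ), σ⁻¹ * K (t * σ - sobs))
        = ∫ u in Ioi (-sobs), (u + sobs)⁻¹ * K u) ∧
    -- (b) the conditional law of `σ_ACC/σ̂` equals the sampling law of `σ̂/σ`
    (∀ v : ℝ, 0 < v →
      (∫ q : ℝ × ℝ,
          ({q : ℝ × ℝ | 0 < q.1 ∧ q.2 / q.1 ≤ v}).indicator
            (fun q => q.1⁻¹ * (q.1⁻¹ * g₂ (q.2 / q.1)) * K (q.2 - sobs)) q)
        = (∫ w in Ioc (0 : ℝ) v, g₂ w) *
            ∫ q : ℝ × ℝ,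
              ({q : ℝ × ℝ | 0 < q.1}).indicator
                (fun q => q.1⁻¹ * (q.1⁻¹ * g₂ (q.2 / q.1)) * K (q.2 - sobs)) q) := by
  constructor
  · intro t ht
    exact part_a K hK_meas hK_nonneg sobs t ht
  · intro v _
    exact part_b g₂ K hg₂_meas hg₂_nonneg hg₂_supp hg₂_int hg₂_integrable
      hK_meas hK_nonneg sobs v
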